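/- Let S be a monoid such that for every set I and every ultrafilter Φ on I, the ultrapower S^I/Φ of the left S-act S is projective. Then S satisfies condition (M_R): for every sequence (bₙ) in S with b₁S ⊇ b₂S ⊇ b₃S ⊇ ⋯, there exists N such that bₙS = b_N S for all n ≥ N. -/

import Mathlib

universe u

/-- A left `S`-act `P` is projective if every `S`-morphism from `P` to `N`
lifts along any surjective `S`-morphism `M → N`. -/
def IsProjectiveAct (S : Type u) [Monoid S] (P : Type u) [MulAction S P] : Prop :=
  ∀ (M N : Type u) [MulAction S M] [MulAction S N] (φ : M → N) (θ : P → N),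
    (∀ (s : S) (m : M), φ (s • m) = s • φ m) → Function.Surjective φ →
    (∀ (s : S) (p : P), θ (s • p) = s • θ p) →
    ∃ ψ : P → M, (∀ (s : S) (p : P), ψ (s • p) = s • ψ p) ∧ ∀ p, φ (ψ p) = θ p

/-- Coproduct of `P`-many copies of the left `S`-act `S`. -/
def CopAct (S P : Type u) : Type u := S × P

instance CopAct.instMulAction {S P : Type u} [Monoid S] : MulAction S (CopAct S P) where
  smul s x := (s * x.1, x.2)
  one_smul x := by
    show ((1 : S) * x.1, x.2) = x
    rw [one_mul]
    exact Prod.mk.eta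
  mul_smul s t x := by
    show (s * t * x.1, x.2) = (s * (t * x.1), x.2)
    rw [mul_assoc]

theorem CopAct.smul_def {S P : Type u} [Monoid S] (s : S) (x : CopAct S P) :
    s • x = (s * x.1, x.2) := rfl

/-- if every ultrapower `S^I/Φ` of the left `S`-act `S` is
projective, then `S` satisfies (M_R): every descending chain of principal
right ideals `b₁S ⊇ b₂S ⊇ ⋯` stabilizes. -/
theorem stmt_7 {S : Type u} [Monoid S]
    (h : ∀ (I : Type u) (Φ : Ultrafilter I), IsProjectiveAct S (Filter.Germ (Φ : Filter I) S))
    (b : ℕ → S)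
    (hb : ∀ n : ℕ, Set.range (fun x => b (n + 1) * x) ⊆ Set.range (fun x => b n * x)) :
    ∃ N : ℕ, ∀ n ≥ N, Set.range (fun x => b n * x) = Set.range (fun x => b N * x) := by
  classical
  -- the chain is transitive
  have hle : ∀ m n : ℕ, m ≤ n → ∃ x, b n = b m * x := by
    intro m n hmn
    induction n, hmn using Nat.le_induction with
    | base => exact ⟨1, (mul_one _).symm⟩
    | succ n hmn ih =>
      obtain ⟨x, hx⟩ := ih
      obtain ⟨y, hy⟩ := hb n ⟨1, rfl⟩
      have hy' : b n * y = b (n + 1) * 1 := hy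
      exact ⟨x * y, by rw [← mul_assoc, ← hx, hy', mul_one]⟩
  have hsub : ∀ p q : S, (∃ x, q = p * x) →
      Set.range (fun y => q * y) ⊆ Set.range (fun y => p * y) := by
    rintro p q ⟨x, rfl⟩ z ⟨y, rfl⟩
    exact ⟨x * y, (mul_assoc p x y).symm⟩
  set I : Type u := ULift.{u} ℕ with hI
  set Φ : Ultrafilter I := Filter.hyperfilter I with hΦ
  set U := Filter.Germ (Φ : Filter I) S with hU
  set β : U := ↑(fun i : I => b i.down) with hβ
  obtain ⟨ψ, hψ, hφψ⟩ :=
    h I Φ (CopAct S U) U (fun x => x.1 • x.2) id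
      (by
        intro s m
        rw [CopAct.smul_def]
        exact mul_smul s m.1 m.2)
      (fun u => ⟨(1, u), one_smul S u⟩)
      (by intro s p; rfl)
  set s0 : S := (ψ β).1 with hs0
  -- s0 lies in every b m * S
  have hmem : ∀ m : ℕ, ∃ t, s0 = b m * t := by
    intro m
    set g : I → S := fun i =>
      if hmi : m ≤ i.down then (hle m i.down hmi).choose else 1 with hg
    have hβg : β = b m • (↑g : U) := by
      have h1 : b m • (↑g : U) = ↑(fun i => b m * g i) := by
        rw [← Filter.Germ.coe_smul]
        rfl
      rw [h1, hβ, Filter.Germ.coe_eq]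
      have hcof : {i : I | m ≤ i.down} ∈ (Φ : Filter I) := by
        rw [hΦ]
        apply Filter.mem_hyperfilter_of_finite_compl
        have : {i : I | m ≤ i.down}ᶜ = ULift.down ⁻¹' (Set.Iio m) := by
          ext i; simp only [Set.mem_compl_iff, Set.mem_setOf_eq, Set.mem_preimage, Set.mem_Iio, not_le]
        rw [this]
        exact (Set.finite_Iio m).preimage (Function.Injective.injOn ULift.down_injective)
      filter_upwards [hcof] with i hi
      have := (hle m i.down hi).choose_spec
      simp only [hg, dif_pos hi]
      exact this
    obtain ⟨t, ht⟩ : ∃ t : S, (ψ (b m • (↑g : U))).1 = b m * t := by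
      rw [hψ, CopAct.smul_def]
      exact ⟨(ψ (↑g : U)).1, rfl⟩
    exact ⟨t, by rw [hs0, hβg]; exact ht⟩
  -- b n lies in s0 * S for some n (in fact for Φ-many n)
  have hrep : ∃ g : I → S, (ψ β).2 = ↑g :=
    Filter.Germ.inductionOn ((ψ β).2) fun f => ⟨f, rfl⟩
  obtain ⟨g, hgrep⟩ := hrep
  have hlift : s0 • ((↑g : U)) = β := by
    rw [← hgrep]
    exact hφψ β
  have hev : {i : I | s0 * g i = b i.down} ∈ (Φ : Filter I) := by
    have h1 : s0 • (↑g : U) = ↑(fun i => s0 * g i) := by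
      rw [← Filter.Germ.coe_smul]; rfl
    rw [h1, hβ, Filter.Germ.coe_eq] at hlift
    exact hlift
  obtain ⟨i0, hi0⟩ := Ultrafilter.nonempty_of_mem hev
  refine ⟨i0.down, fun n hn => Set.Subset.antisymm (hsub _ _ (hle i0.down n hn)) ?_⟩
  -- b i0.down = s0 * g i0 and s0 = b n * t, so b i0.down ∈ b n * S
  obtain ⟨t, ht⟩ := hmem n
  exact hsub _ _ ⟨t * g i0, by rw [← mul_assoc, ← ht, hi0]⟩
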